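/- In a number-conserving non-uniform cyclic CA of length n ≥ 5, for each cell i: if f_i(0,1,1) ≠ f_i(1,1,1) then f_i(0,1,0) = 0 and f_i(1,1,0) = 1. -/

import Mathlib

/-- Global map of a non-uniform cyclic CA of length `n`:
cell `i` updates via its local rule applied to `(x (i-1), x i, x (i+1))`, indices mod `n`. -/
def caStep (n : ℕ) [NeZero n] (f : Fin n → Bool → Bool → Bool → Bool)
    (x : Fin n → Bool) : Fin n → Bool :=
  fun i => f i (x (i - 1)) (x i) (x (i + 1))

/-- Number of cells in state `true` (i.e. 1). -/
def onesCount (n : ℕ) (x : Fin n → Bool) : ℕ :=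
  (Finset.univ.filter fun i => x i = true).card

/-- The CA conserves the number of 1s in every configuration. -/
def numberConserving (n : ℕ) [NeZero n] (f : Fin n → Bool → Bool → Bool → Bool) : Prop :=
  ∀ x : Fin n → Bool, onesCount n (caStep n f x) = onesCount n x

/-- The elementary CA rule with Wolfram number `R`. -/
def wolfram (R : ℕ) (a b c : Bool) : Bool :=
  R.testBit (4 * a.toNat + 2 * b.toNat + c.toNat)

theorem stmt14 (n : ℕ) (hn : 5 ≤ n) [NeZero n] (f : Fin n → Bool → Bool → Bool → Bool)
    (h : numberConserving n f) :
    ∀ i : Fin n, f i false true true ≠ f i true true true →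
      f i false true false = false ∧ f i true true false = true := by
  open Fin.NatCast Fin.CommRing in (
  have hones : ∀ x : Fin n → Bool, onesCount n x = ∑ j, (x j).toNat := by
    intro x
    rw [onesCount, Finset.card_filter]
    exact Finset.sum_congr rfl fun j _ => by cases x j <;> simp
  have hsum : ∀ x : Fin n → Bool,
      ∑ j, (caStep n f x j).toNat = ∑ j, (x j).toNat := by
    intro x; have := h x; rwa [hones, hones] at this
  -- every rule fixes (1,1,1)
  have hall : ∀ j : Fin n, f j true true true = true := by
    by_contra hcon
    push_neg at hcon
    obtain ⟨j0, hj0⟩ := hcon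
    have h1 := hsum (fun _ => true)
    simp only [caStep] at h1
    have hlt : ∑ j, (f j true true true).toNat < ∑ _j : Fin n, (true : Bool).toNat := by
      refine Finset.sum_lt_sum (fun j _ => Bool.toNat_le _) ⟨j0, Finset.mem_univ _, ?_⟩
      cases hfj : f j0 true true true
      · simp
      · exact absurd hfj hj0
    omega
  intro i hne
  have h011 : f i false true true = false := by
    cases hf : f i false true true
    · rfl
    · exact absurd (by rw [hf, hall]) hne
  -- arithmetic on Fin n
  have hcast : ∀ a : ℕ, a < n → (((a : ℕ) : Fin n) : ℕ) = a := fun a ha => by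
    rw [Fin.val_natCast, Nat.mod_eq_of_lt ha]
  have hne' : ∀ a b : ℕ, a < n → b < n → a ≠ b →
      i + ((a : ℕ) : Fin n) ≠ i + ((b : ℕ) : Fin n) := by
    intro a b ha hb hab heq
    have h2 := congrArg Fin.val (add_left_cancel heq)
    rw [hcast a ha, hcast b hb] at h2
    exact hab h2
  have hnegc : ∀ c : ℕ, c ≤ n → -((c : ℕ) : Fin n) = ((n - c : ℕ) : Fin n) := by
    intro c hc
    refine neg_eq_of_add_eq_zero_left ?_
    rw [← Nat.cast_add, Nat.sub_add_cancel hc, Fin.natCast_self]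
  -- canonical forms
  have c0 : i = i + ((0 : ℕ) : Fin n) := by rw [Nat.cast_zero, add_zero]
  have c1 : i + 1 = i + ((1 : ℕ) : Fin n) := by rw [Nat.cast_one]
  have c2 : i + 1 + 1 = i + ((2 : ℕ) : Fin n) := by
    rw [add_assoc]
    congr 1
    rw [show (2 : ℕ) = 1 + 1 from rfl, Nat.cast_add, Nat.cast_one]
  have c3 : i + 1 + 1 + 1 = i + ((3 : ℕ) : Fin n) := by
    rw [add_assoc, add_assoc]
    congr 1
    rw [show (3 : ℕ) = 1 + (1 + 1) from rfl, Nat.cast_add, Nat.cast_add, Nat.cast_one]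
  have c1m : i - 1 = i + ((n - 1 : ℕ) : Fin n) := by
    rw [sub_eq_add_neg, ← Nat.cast_one (R := Fin n), hnegc 1 (by omega)]
  have c2m : i - 1 - 1 = i + ((n - 2 : ℕ) : Fin n) := by
    rw [sub_sub, sub_eq_add_neg,
      show (1 : Fin n) + 1 = ((2 : ℕ) : Fin n) by
        rw [show (2 : ℕ) = 1 + 1 from rfl, Nat.cast_add, Nat.cast_one],
      hnegc 2 (by omega)]
  have c3m : i - 1 - 1 - 1 = i + ((n - 3 : ℕ) : Fin n) := by
    rw [sub_sub, sub_sub, sub_eq_add_neg,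
      show (1 : Fin n) + (1 + 1) = ((3 : ℕ) : Fin n) by
        rw [show (3 : ℕ) = 1 + (1 + 1) from rfl, Nat.cast_add, Nat.cast_add, Nat.cast_one],
      hnegc 3 (by omega)]
  have mk : ∀ (p q : Fin n) (a b : ℕ), p = i + ((a : ℕ) : Fin n) → q = i + ((b : ℕ) : Fin n) →
      a < n → b < n → a ≠ b → p ≠ q := by
    intro p q a b hp hq ha hb hab
    rw [hp, hq]; exact hne' a b ha hb hab
  -- the needed inequalities between cells
  have A1 : i - 1 - 1 - 1 ≠ i - 1 := mk _ _ (n-3) (n-1) c3m c1m (by omega) (by omega) (by omega)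
  have A2 : i - 1 - 1 - 1 ≠ i + 1 := mk _ _ (n-3) 1 c3m c1 (by omega) (by omega) (by omega)
  have B1 : i - 1 - 1 ≠ i - 1 := mk _ _ (n-2) (n-1) c2m c1m (by omega) (by omega) (by omega)
  have B2 : i - 1 - 1 ≠ i + 1 := mk _ _ (n-2) 1 c2m c1 (by omega) (by omega) (by omega)
  have C1 : i ≠ i - 1 := mk _ _ 0 (n-1) c0 c1m (by omega) (by omega) (by omega)
  have C2 : i ≠ i + 1 := mk _ _ 0 1 c0 c1 (by omega) (by omega) (by omega)
  have D1 : i + 1 + 1 ≠ i - 1 := mk _ _ 2 (n-1) c2 c1m (by omega) (by omega) (by omega)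
  have D2 : i + 1 + 1 ≠ i + 1 := mk _ _ 2 1 c2 c1 (by omega) (by omega) (by omega)
  have E1 : i + 1 + 1 + 1 ≠ i - 1 := mk _ _ 3 (n-1) c3 c1m (by omega) (by omega) (by omega)
  have E2 : i + 1 + 1 + 1 ≠ i + 1 := mk _ _ 3 1 c3 c1 (by omega) (by omega) (by omega)
  have F1 : i - 1 ≠ i + 1 := mk _ _ (n-1) 1 c1m c1 (by omega) (by omega) (by omega)
  have F2 : i + 1 ≠ i - 1 := F1.symm
  have G1 : i - 1 - 1 ≠ i := mk _ _ (n-2) 0 c2m c0 (by omega) (by omega) (by omega)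
  have G2 : i - 1 - 1 ≠ i + 1 + 1 := mk _ _ (n-2) 2 c2m c2 (by omega) (by omega) (by omega)
  have G3 : i - 1 ≠ i := mk _ _ (n-1) 0 c1m c0 (by omega) (by omega) (by omega)
  have G4 : i - 1 ≠ i + 1 + 1 := mk _ _ (n-1) 2 c1m c2 (by omega) (by omega) (by omega)
  have G5 : i ≠ i + 1 + 1 := mk _ _ 0 2 c0 c2 (by omega) (by omega) (by omega)
  have G6 : i + 1 ≠ i + 1 + 1 := mk _ _ 1 2 c1 c2 (by omega) (by omega) (by omega)
  -- neighbourhood rewrites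
  have r1 : i - 1 - 1 + 1 = i - 1 := sub_add_cancel _ _
  have r2 : i - 1 + 1 = i := sub_add_cancel _ _
  have r3 : i + 1 - 1 = i := add_sub_cancel_right _ _
  have r4 : i + 1 + 1 - 1 = i + 1 := add_sub_cancel_right _ _
  -- the window
  set s : Finset (Fin n) := {i - 1 - 1, i - 1, i, i + 1, i + 1 + 1} with hs
  have hS : ∀ g : Fin n → ℕ, ∑ j ∈ s, g j =
      g (i - 1 - 1) + g (i - 1) + g i + g (i + 1) + g (i + 1 + 1) := by
    intro g
    rw [hs, Finset.sum_insert (by simp [B1, G1, B2, G2]),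
      Finset.sum_insert (by simp [G3, F1, G4]),
      Finset.sum_insert (by simp [C2, G5]),
      Finset.sum_insert (by simp [G6]), Finset.sum_singleton]
    ring
  have hcompl : ∀ j : Fin n, j ∉ s → j - 1 ≠ i - 1 ∧ j - 1 ≠ i + 1 ∧ j ≠ i - 1 ∧ j ≠ i + 1 ∧
      j + 1 ≠ i - 1 ∧ j + 1 ≠ i + 1 := by
    intro j hj
    simp only [hs, Finset.mem_insert, Finset.mem_singleton, not_or] at hj
    obtain ⟨h1, h2, h3, h4, h5⟩ := hj
    refine ⟨fun hq => h3 (sub_left_inj.mp hq), fun hq => h5 (sub_eq_iff_eq_add.mp hq),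
      h2, h4, fun hq => h1 (eq_sub_iff_add_eq.mpr hq), fun hq => h3 (add_right_cancel hq)⟩
  have key : ∀ x : Fin n → Bool, (∀ j ∉ s, (caStep n f x j).toNat = (x j).toNat) →
      (caStep n f x (i-1-1)).toNat + (caStep n f x (i-1)).toNat + (caStep n f x i).toNat +
        (caStep n f x (i+1)).toNat + (caStep n f x (i+1+1)).toNat
      = (x (i-1-1)).toNat + (x (i-1)).toNat + (x i).toNat + (x (i+1)).toNat +
        (x (i+1+1)).toNat := by
    intro x hx
    have h1 := hsum x
    rw [← Finset.sum_add_sum_compl s (fun j => (caStep n f x j).toNat),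
        ← Finset.sum_add_sum_compl s (fun j => (x j).toNat)] at h1
    have h2 : ∑ j ∈ sᶜ, (caStep n f x j).toNat = ∑ j ∈ sᶜ, (x j).toNat :=
      Finset.sum_congr rfl fun j hj => hx j (Finset.mem_compl.mp hj)
    have h3 : ∑ j ∈ s, (caStep n f x j).toNat = ∑ j ∈ s, (x j).toNat := by omega
    rw [hS, hS] at h3
    exact h3
  -- configuration C : zero at i - 1
  have hC := key (fun j => if j = i - 1 then false else true) (by
    intro j hj
    obtain ⟨g1, g2, g3, g4, g5, g6⟩ := hcompl j hj
    simp [caStep, g1, g3, g5, hall])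
  simp only [caStep, r1, r2, r3, r4] at hC
  simp only [A1, B1, C1, F2, D1, E1, if_neg, if_pos, if_true, eq_self_iff_true,
    ite_true, ite_false, reduceIte] at hC
  rw [hall, hall, h011] at hC
  simp only [Bool.toNat_true, Bool.toNat_false] at hC
  -- configuration B : zero at i + 1
  have hB := key (fun j => if j = i + 1 then false else true) (by
    intro j hj
    obtain ⟨g1, g2, g3, g4, g5, g6⟩ := hcompl j hj
    simp [caStep, g2, g4, g6, hall])
  simp only [caStep, r1, r2, r3, r4] at hB
  simp only [A2, B2, C2, F1, D2, E2, if_neg, if_pos, if_true, eq_self_iff_true,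
    ite_true, ite_false, reduceIte] at hB
  rw [hall, hall] at hB
  simp only [Bool.toNat_true, Bool.toNat_false] at hB
  -- configuration D : zeros at i - 1 and i + 1
  have hD := key (fun j => if j = i - 1 ∨ j = i + 1 then false else true) (by
    intro j hj
    obtain ⟨g1, g2, g3, g4, g5, g6⟩ := hcompl j hj
    simp [caStep, g1, g2, g3, g4, g5, g6, hall])
  simp only [caStep, r1, r2, r3, r4] at hD
  simp only [A1, A2, B1, B2, C1, C2, F1, F2, D1, D2, E1, E2, if_neg, if_pos,
    if_true, eq_self_iff_true, ite_true, ite_false, reduceIte, or_self, or_true, true_or,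
    or_false, false_or] at hD
  simp only [Bool.toNat_true, Bool.toNat_false] at hD
  -- combine
  have t1 : (f i false true false).toNat ≤ 1 := Bool.toNat_le _
  have t2 : (f i true true false).toNat ≤ 1 := Bool.toNat_le _
  have t3 : (f (i+1) true false true).toNat ≤ 1 := Bool.toNat_le _
  have t4 : (f (i+1+1) false true true).toNat ≤ 1 := Bool.toNat_le _
  have t5 : (f (i-1-1) true true false).toNat ≤ 1 := Bool.toNat_le _
  have t6 : (f (i-1) true false true).toNat ≤ 1 := Bool.toNat_le _
  constructor
  · have : (f i false true false).toNat = 0 := by omega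
    rwa [Bool.toNat_eq_zero] at this
  · have : (f i true true false).toNat = 1 := by omega
    rwa [Bool.toNat_eq_one] at this)
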